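/- Let n ≥ 1, N > 0, and let F : (0,∞) × ℝⁿ → [0,∞] be measurable. Define G(y) := sup over cubes Q̃ containing y of ( (1/|Q̃|) ∫_{Q̃} F(ℓ(Q̃), z)² dz )^{1/2}, and ℳ₂G(x) := sup over cubes Q containing x of ( (1/|Q|) ∫_Q G(y)² dy )^{1/2}. Then there exists a constant C > 0, depending only on n and N, such that for every x ∈ ℝⁿ: sup over cubes Q containing x of Σ_{j=0}^∞ 2^{−jN} |2^jQ|^{−1/2} · ( sup over s ∈ [ℓ(Q), √2 ℓ(Q)] of (∫_{S_j(Q)} F(s,z)² dz)^{1/2} ) ≤ C · ℳ₂(G)(x). -/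

import Mathlib

open MeasureTheory ENNReal

noncomputable section

abbrev Euc (n : ℕ) := EuclideanSpace ℝ (Fin n)

/-- The closed axis-parallel cube with center `z` and side length `ℓ`. -/
def cube {n : ℕ} (z : Euc n) (ℓ : ℝ) : Set (Euc n) :=
  {y | ∀ i, |y i - z i| ≤ ℓ / 2}

/-- The dyadic annuli of the cube with center `z` and side length `ℓ`:
`S_0(Q) = Q`, `S_j(Q) = 2^jQ ∖ 2^{j-1}Q` for `j ≥ 1`. -/
def annulus {n : ℕ} (z : Euc n) (ℓ : ℝ) : ℕ → Set (Euc n)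
  | 0 => cube z ℓ
  | j + 1 => cube z ((2 : ℝ) ^ (j + 1) * ℓ) \ cube z ((2 : ℝ) ^ j * ℓ)

lemma measurable_coord {n : ℕ} (i : Fin n) : Measurable fun y : Euc n => y i :=
  (measurable_pi_apply i).comp (WithLp.measurable_ofLp 2 _)

lemma measurableSet_cube {n : ℕ} (z : Euc n) (s : ℝ) : MeasurableSet (cube z s) := by
  have : cube z s = ⋂ i, {y : Euc n | |y i - z i| ≤ s / 2} := by
    ext y; simp [cube, Set.mem_iInter]
  rw [this]
  exact MeasurableSet.iInter fun i =>
    measurableSet_le (((measurable_coord i).sub measurable_const).abs) measurable_const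

lemma cube_subset_cube {n : ℕ} (z : Euc n) {s t : ℝ} (h : s ≤ t) : cube z s ⊆ cube z t :=
  fun y hy i => (hy i).trans (by linarith)

lemma mem_cube_self {n : ℕ} (y : Euc n) {s : ℝ} (hs : 0 ≤ s) : y ∈ cube y s := by
  intro i; simp only [sub_self, abs_zero]; positivity

lemma mem_cube_symm {n : ℕ} {y w : Euc n} {s : ℝ} : y ∈ cube w s ↔ w ∈ cube y s := by
  constructor <;> intro h i <;> rw [abs_sub_comm] <;> exact h i

lemma volume_cube {n : ℕ} (z : Euc n) {s : ℝ} (hs : 0 ≤ s) :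
    volume (cube z s) = ENNReal.ofReal (s ^ n) := by
  have hmp := PiLp.volume_preserving_ofLp (Fin n)
  have hpre : cube z s =
      (@WithLp.ofLp 2 (Fin n → ℝ)) ⁻¹'
        (Set.univ.pi fun i => Set.Icc (z i - s / 2) (z i + s / 2)) := by
    ext y
    simp only [cube, Set.mem_preimage, Set.mem_pi, Set.mem_univ, forall_true_left,
      Set.mem_Icc, Set.mem_setOf_eq]
    constructor
    · intro h i; have := abs_le.mp (h i); constructor <;> linarith [this.1, this.2]
    · intro h i; rw [abs_le]; have := h i; constructor <;> linarith [this.1, this.2]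
  rw [hpre, MeasurePreserving.measure_preimage hmp
    (MeasurableSet.nullMeasurableSet (by measurability)), volume_pi_pi]
  simp only [Real.volume_Icc]
  have : ∀ i ∈ Finset.univ, ENNReal.ofReal (z i + s / 2 - (z i - s / 2)) = ENNReal.ofReal s := by
    intro i _; ring_nf
  rw [Finset.prod_congr rfl this, Finset.prod_const, ← ENNReal.ofReal_pow hs]
  simp

/-- `G(y) = sup_{Q̃ ∋ y} ((1/|Q̃|) ∫_{Q̃} F(ℓ(Q̃), z)² dz)^{1/2}`. -/
noncomputable def Gfun {n : ℕ} (F : ℝ → Euc n → ℝ≥0∞) (y : Euc n) : ℝ≥0∞ :=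
  ⨆ (w : Euc n) (s : ℝ) (_ : 0 < s) (_ : y ∈ cube w s),
    ((ENNReal.ofReal (s ^ n))⁻¹ * ∫⁻ z in cube w s, F s z ^ 2) ^ ((1 : ℝ) / 2)

/-- The `L²`-based uncentered maximal operator over cubes,
`ℳ₂h(x) = sup_{Q ∋ x} ((1/|Q|) ∫_Q h²)^{1/2}`. -/
noncomputable def M2 {n : ℕ} (h : Euc n → ℝ≥0∞) (x : Euc n) : ℝ≥0∞ :=
  ⨆ (w : Euc n) (s : ℝ) (_ : 0 < s) (_ : x ∈ cube w s),
    ((ENNReal.ofReal (s ^ n))⁻¹ * ∫⁻ y in cube w s, h y ^ 2) ^ ((1 : ℝ) / 2)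

lemma sq_rpow_half (x : ℝ≥0∞) : (x ^ ((1 : ℝ) / 2)) ^ (2 : ℕ) = x := by
  rw [← ENNReal.rpow_natCast (x ^ ((1:ℝ)/2)) 2, ← ENNReal.rpow_mul]
  norm_num

/-- From `G² ≥ a⁻¹ * J` (sup over cubes) we get `J ≤ a * G²`. -/
lemma lintegral_le_mul_Gfun_sq {n : ℕ} (F : ℝ → Euc n → ℝ≥0∞) (y : Euc n) {s : ℝ}
    (hs : 0 < s) :
    (∫⁻ w in cube y s, F s w ^ 2) ≤ ENNReal.ofReal (s ^ n) * Gfun F y ^ 2 := by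
  set a := ENNReal.ofReal (s ^ n) with ha
  have ha0 : a ≠ 0 := by
    simp only [ha, ne_eq, ENNReal.ofReal_eq_zero, not_le]; positivity
  have hatop : a ≠ ⊤ := ENNReal.ofReal_ne_top
  set J := ∫⁻ w in cube y s, F s w ^ 2 with hJ
  have hle : (a⁻¹ * J) ^ ((1:ℝ)/2) ≤ Gfun F y := by
    refine le_iSup_of_le y (le_iSup_of_le s (le_iSup_of_le hs (le_iSup_of_le
      (mem_cube_self y hs.le) le_rfl)))
  have h2 : a⁻¹ * J ≤ Gfun F y ^ 2 := by
    calc a⁻¹ * J = ((a⁻¹ * J) ^ ((1:ℝ)/2)) ^ (2:ℕ) := (sq_rpow_half _).symm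
    _ ≤ Gfun F y ^ 2 := by
        rw [pow_two, pow_two]; exact mul_le_mul' hle hle
  calc J = a * (a⁻¹ * J) := by
        rw [← mul_assoc, ENNReal.mul_inv_cancel ha0 hatop, one_mul]
  _ ≤ a * Gfun F y ^ 2 := mul_le_mul_right h2 _

/-- Fubini core: the integral of `F s ²` over a set `C` of cube-centers is controlled by the
integral of `Gfun F ²` over any set `R` containing all the cubes `cube w s`, `w ∈ C`. -/
lemma lintegral_le_lintegral_Gfun {n : ℕ} (F : ℝ → Euc n → ℝ≥0∞)
    (hF : Measurable (Function.uncurry F)) {s : ℝ} (hs : 0 < s)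
    {z : Euc n} {B : ℝ} (R : Set (Euc n))
    (hsub : ∀ w ∈ cube z B, cube w s ⊆ R) :
    (∫⁻ w in cube z B, F s w ^ 2) ≤ ∫⁻ y in R, Gfun F y ^ 2 := by
  set C := cube z B with hCdef
  set a := ENNReal.ofReal (s ^ n) with ha
  have ha0 : a ≠ 0 := by
    simp only [ha, ne_eq, ENNReal.ofReal_eq_zero, not_le]; positivity
  have hatop : a ≠ ⊤ := ENNReal.ofReal_ne_top
  set ν := volume.restrict R with hν
  have hmf : Measurable fun w : Euc n => F s w ^ 2 :=
    (hF.comp (measurable_const.prodMk measurable_id)).pow_const 2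
  set k : Euc n → Euc n → ℝ≥0∞ :=
    fun w y => C.indicator (fun w => F s w ^ 2) w * (cube w s).indicator 1 y with hk
  have hD : MeasurableSet {p : Euc n × Euc n | p.2 ∈ cube p.1 s} := by
    have : {p : Euc n × Euc n | p.2 ∈ cube p.1 s}
        = ⋂ i, {p : Euc n × Euc n | |p.2 i - p.1 i| ≤ s / 2} := by
      ext p; simp [cube, Set.mem_iInter]
    rw [this]
    exact MeasurableSet.iInter fun i => measurableSet_le
      ((((measurable_coord i).comp measurable_snd).sub
        ((measurable_coord i).comp measurable_fst)).abs) measurable_const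
  have hkm : Measurable (Function.uncurry k) := by
    have h1 : Measurable fun p : Euc n × Euc n =>
        C.indicator (fun w => F s w ^ 2) p.1 :=
      (hmf.indicator (measurableSet_cube z B)).comp measurable_fst
    have h2 : Measurable fun p : Euc n × Euc n =>
        ({p : Euc n × Euc n | p.2 ∈ cube p.1 s}).indicator (1 : Euc n × Euc n → ℝ≥0∞) p :=
      measurable_one.indicator hD
    have : Function.uncurry k = fun p : Euc n × Euc n =>
        C.indicator (fun w => F s w ^ 2) p.1 *
        ({p : Euc n × Euc n | p.2 ∈ cube p.1 s}).indicator 1 p := by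
      funext p
      simp only [Function.uncurry, hk, Set.indicator_apply, Set.mem_setOf_eq]
      rfl
    rw [this]
    exact h1.mul h2
  have hswap : ∫⁻ w, ∫⁻ y, k w y ∂ν = ∫⁻ y, (∫⁻ w, k w y) ∂ν :=
    lintegral_lintegral_swap hkm.aemeasurable
  have hleft : ∫⁻ w, ∫⁻ y, k w y ∂ν = (∫⁻ w in C, F s w ^ 2) * a := by
    have hinner : ∀ w, ∫⁻ y, k w y ∂ν
        = C.indicator (fun w => F s w ^ 2 * a) w := by
      intro w
      have : ∫⁻ y, k w y ∂ν
          = C.indicator (fun w => F s w ^ 2) w * ν (cube w s) := by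
        rw [hk]
        rw [lintegral_const_mul _ (measurable_one.indicator (measurableSet_cube w s))]
        rw [lintegral_indicator_one (measurableSet_cube w s)]
      rw [this, hν, Measure.restrict_apply (measurableSet_cube w s)]
      by_cases hw : w ∈ C
      · rw [Set.inter_eq_left.mpr (hsub w hw), volume_cube w hs.le,
          Set.indicator_of_mem hw, Set.indicator_of_mem hw]
      · rw [Set.indicator_of_notMem hw, Set.indicator_of_notMem hw, zero_mul]
    calc ∫⁻ w, ∫⁻ y, k w y ∂ν = ∫⁻ w, C.indicator (fun w => F s w ^ 2 * a) w := by
          exact lintegral_congr hinner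
    _ = ∫⁻ w in C, F s w ^ 2 * a := lintegral_indicator (measurableSet_cube z B) _
    _ = (∫⁻ w in C, F s w ^ 2) * a := lintegral_mul_const a hmf
  have hright : ∫⁻ y, (∫⁻ w, k w y) ∂ν ≤ a * ∫⁻ y in R, Gfun F y ^ 2 := by
    have hpt : ∀ y, ∫⁻ w, k w y ≤ a * Gfun F y ^ 2 := by
      intro y
      have h1 : ∀ w, k w y ≤ (cube y s).indicator (fun w => F s w ^ 2) w := by
        intro w
        by_cases hw : w ∈ C
        · by_cases hy : y ∈ cube w s
          · rw [hk]
            simp only [Set.indicator_of_mem hw, Set.indicator_of_mem hy, Pi.one_apply, mul_one]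
            rw [Set.indicator_of_mem (mem_cube_symm.mp hy)]
          · simp [hk, Set.indicator_of_notMem hy]
        · simp [hk, Set.indicator_of_notMem hw]
      calc ∫⁻ w, k w y ≤ ∫⁻ w, (cube y s).indicator (fun w => F s w ^ 2) w :=
            lintegral_mono h1
      _ = ∫⁻ w in cube y s, F s w ^ 2 := lintegral_indicator (measurableSet_cube y s) _
      _ ≤ a * Gfun F y ^ 2 := lintegral_le_mul_Gfun_sq F y hs
    calc ∫⁻ y, (∫⁻ w, k w y) ∂ν ≤ ∫⁻ y, a * Gfun F y ^ 2 ∂ν := lintegral_mono hpt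
    _ = a * ∫⁻ y in R, Gfun F y ^ 2 := lintegral_const_mul' a _ hatop
  have : (∫⁻ w in C, F s w ^ 2) * a ≤ a * ∫⁻ y in R, Gfun F y ^ 2 := by
    rw [← hleft, hswap]; exact hright
  rw [mul_comm] at this
  exact (ENNReal.mul_le_mul_iff_right ha0 hatop).mp this

lemma annulus_subset {n : ℕ} (z : Euc n) (ℓ : ℝ) (j : ℕ) :
    annulus z ℓ j ⊆ cube z ((2 : ℝ) ^ j * ℓ) := by
  cases j with
  | zero => rw [annulus, pow_zero, one_mul]
  | succ j => rw [annulus]; exact Set.diff_subset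

lemma rpow_half_sq (x : ℝ≥0∞) : (x ^ (2 : ℕ)) ^ ((1 : ℝ) / 2) = x := by
  rw [← ENNReal.rpow_natCast x 2, ← ENNReal.rpow_mul]
  norm_num

lemma four_pow_rpow_half (n : ℕ) : ((4 : ℝ) ^ n) ^ ((1 : ℝ) / 2) = 2 ^ n := by
  have h2 : (4 : ℝ) ^ ((1 : ℝ) / 2) = 2 := by
    rw [show (4 : ℝ) = 2 ^ (2 : ℕ) by norm_num, ← Real.rpow_natCast (2 : ℝ) 2,
      ← Real.rpow_mul (by norm_num : (0 : ℝ) ≤ 2)]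
    norm_num
  rw [← Real.rpow_natCast (4 : ℝ) n, ← Real.rpow_mul (by norm_num : (0 : ℝ) ≤ 4),
    mul_comm, Real.rpow_mul (by norm_num : (0 : ℝ) ≤ 4), h2, Real.rpow_natCast]

lemma half_M2 {n : ℕ} (h : Euc n → ℝ≥0∞) (x w : Euc n) {A : ℝ} (hA : 0 < A)
    (hx : x ∈ cube w A) :
    (∫⁻ y in cube w A, h y ^ 2) ^ ((1 : ℝ) / 2) ≤
      ENNReal.ofReal (A ^ n) ^ ((1 : ℝ) / 2) * M2 h x := by
  set a := ENNReal.ofReal (A ^ n) with ha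
  have ha0 : a ≠ 0 := by
    simp only [ha, ne_eq, ENNReal.ofReal_eq_zero, not_le]; positivity
  have hatop : a ≠ ⊤ := ENNReal.ofReal_ne_top
  set I := ∫⁻ y in cube w A, h y ^ 2 with hI
  have hM : (a⁻¹ * I) ^ ((1 : ℝ) / 2) ≤ M2 h x :=
    le_iSup_of_le w (le_iSup_of_le A (le_iSup_of_le hA (le_iSup_of_le hx le_rfl)))
  calc I ^ ((1 : ℝ) / 2) = (a * (a⁻¹ * I)) ^ ((1 : ℝ) / 2) := by
        rw [← mul_assoc, ENNReal.mul_inv_cancel ha0 hatop, one_mul]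
  _ = a ^ ((1 : ℝ) / 2) * ((a⁻¹ * I) ^ ((1 : ℝ) / 2)) := by
        rw [ENNReal.mul_rpow_of_nonneg _ _ (by norm_num)]
  _ ≤ a ^ ((1 : ℝ) / 2) * M2 h x := mul_le_mul_right hM _

/-- The weighted sum over dyadic annuli of `L²` averages at comparable scales is controlled
by the iterated maximal function `ℳ₂(G)`. -/
theorem statement8 (n : ℕ) (hn : 1 ≤ n) (N : ℝ) (hN : 0 < N) :
    ∃ C > 0, ∀ F : ℝ → Euc n → ℝ≥0∞, Measurable (Function.uncurry F) →
      ∀ (x z : Euc n) (ℓ : ℝ), 0 < ℓ → x ∈ cube z ℓ →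
        (∑' j : ℕ, ENNReal.ofReal ((2 : ℝ) ^ (-(j : ℝ) * N)) *
            (ENNReal.ofReal (((2 : ℝ) ^ j * ℓ) ^ n)) ^ (-(1 : ℝ) / 2) *
            ⨆ s ∈ Set.Icc ℓ (Real.sqrt 2 * ℓ),
              (∫⁻ w in annulus z ℓ j, F s w ^ 2) ^ ((1 : ℝ) / 2)) ≤
          ENNReal.ofReal C * M2 (Gfun F) x := by
  set r : ℝ := (2 : ℝ) ^ (-N) with hr
  have hr0 : 0 ≤ r := (Real.rpow_pos_of_pos two_pos _).le
  have hr1 : r < 1 := Real.rpow_lt_one_of_one_lt_of_neg one_lt_two (by linarith)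
  refine ⟨(2 : ℝ) ^ n * (1 - r)⁻¹, mul_pos (by positivity) (inv_pos.mpr (by linarith)), ?_⟩
  intro F hF x z ℓ hℓ hx
  set P := M2 (Gfun F) x with hP
  have hsqrt2 : Real.sqrt 2 ≤ 2 := by
    nlinarith [Real.sq_sqrt (by norm_num : (0:ℝ) ≤ 2), Real.sqrt_nonneg 2]
  -- Step A : per-term bound
  have stepA : ∀ j : ℕ,
      ENNReal.ofReal ((2 : ℝ) ^ (-(j : ℝ) * N)) *
        (ENNReal.ofReal (((2 : ℝ) ^ j * ℓ) ^ n)) ^ (-(1 : ℝ) / 2) *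
        (⨆ s ∈ Set.Icc ℓ (Real.sqrt 2 * ℓ),
          (∫⁻ w in annulus z ℓ j, F s w ^ 2) ^ ((1 : ℝ) / 2)) ≤
        ENNReal.ofReal ((2 : ℝ) ^ n * r ^ j) * P := by
    intro j
    have h2j : (1 : ℝ) ≤ 2 ^ j := one_le_pow₀ (by norm_num : (1:ℝ) ≤ 2)
    set B : ℝ := (2 : ℝ) ^ j * ℓ with hBdef
    set A : ℝ := (2 : ℝ) ^ (j + 2) * ℓ with hAdef
    have hApos : 0 < A := by positivity
    have hBpos : 0 < B := by positivity
    have hA4B : A = 4 * B := by rw [hAdef, hBdef, pow_add]; ring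
    set R : Set (Euc n) := cube z A with hRdef
    set I : ℝ≥0∞ := ∫⁻ y in R, Gfun F y ^ 2 with hI
    -- sup over s bound
    have hsup : (⨆ s ∈ Set.Icc ℓ (Real.sqrt 2 * ℓ),
        (∫⁻ w in annulus z ℓ j, F s w ^ 2) ^ ((1 : ℝ) / 2)) ≤ I ^ ((1 : ℝ) / 2) := by
      refine iSup₂_le fun s hs => ?_
      have hspos : 0 < s := lt_of_lt_of_le hℓ hs.1
      have hsub : ∀ w ∈ cube z B, cube w s ⊆ R := by
        intro w hw y hy i
        have h1 := hw i
        have h2 := hy i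
        have h3 : |y i - z i| ≤ s / 2 + B / 2 := by
          calc |y i - z i| ≤ |y i - w i| + |w i - z i| := abs_sub_le _ _ _
          _ ≤ s / 2 + B / 2 := add_le_add h2 h1
        have hsle : s ≤ 2 * ℓ := le_trans hs.2 (by nlinarith)
        refine h3.trans ?_
        rw [hAdef, hBdef, pow_add]
        nlinarith
      refine ENNReal.rpow_le_rpow ?_ (by norm_num)
      calc (∫⁻ w in annulus z ℓ j, F s w ^ 2)
          ≤ ∫⁻ w in cube z B, F s w ^ 2 := lintegral_mono_set (annulus_subset z ℓ j)
      _ ≤ I := lintegral_le_lintegral_Gfun F hF hspos R hsub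
    -- maximal function bound
    have hxA : x ∈ cube z A := cube_subset_cube z (by nlinarith) hx
    have hmax : I ^ ((1 : ℝ) / 2) ≤ ENNReal.ofReal (A ^ n) ^ ((1 : ℝ) / 2) * P :=
      half_M2 (Gfun F) x z hApos hxA
    -- combine with coefficients
    have hcoef : ENNReal.ofReal ((2 : ℝ) ^ (-(j : ℝ) * N)) *
        (ENNReal.ofReal (B ^ n)) ^ (-(1 : ℝ) / 2) *
        ENNReal.ofReal (A ^ n) ^ ((1 : ℝ) / 2) =
        ENNReal.ofReal ((2 : ℝ) ^ n * r ^ j) := by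
      have hb : (0 : ℝ) < B ^ n := by positivity
      have hAn : (0 : ℝ) < A ^ n := by positivity
      rw [ENNReal.ofReal_rpow_of_pos hb, ENNReal.ofReal_rpow_of_pos hAn,
        ← ENNReal.ofReal_mul (by positivity), ← ENNReal.ofReal_mul (by positivity)]
      congr 1
      have hAB : (A : ℝ) ^ n = 4 ^ n * B ^ n := by rw [hA4B, mul_pow]
      rw [hAB, Real.mul_rpow (by positivity) (by positivity), four_pow_rpow_half]
      have hBB : (B ^ n) ^ (-(1 : ℝ) / 2) * (B ^ n) ^ ((1 : ℝ) / 2) = 1 := by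
        rw [← Real.rpow_add hb]; norm_num
      have hrj : (2 : ℝ) ^ (-(j : ℝ) * N) = r ^ j := by
        rw [hr, ← Real.rpow_natCast ((2:ℝ) ^ (-N)) j, ← Real.rpow_mul (by norm_num)]
        congr 1; ring
      calc (2 : ℝ) ^ (-(j : ℝ) * N) * (B ^ n) ^ (-(1 : ℝ) / 2) *
            ((2 : ℝ) ^ n * (B ^ n) ^ ((1 : ℝ) / 2))
          = (2 : ℝ) ^ (-(j : ℝ) * N) * (2 : ℝ) ^ n *
            ((B ^ n) ^ (-(1 : ℝ) / 2) * (B ^ n) ^ ((1 : ℝ) / 2)) := by ring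
      _ = (2 : ℝ) ^ n * r ^ j := by rw [hBB, hrj]; ring
    calc ENNReal.ofReal ((2 : ℝ) ^ (-(j : ℝ) * N)) *
          (ENNReal.ofReal (B ^ n)) ^ (-(1 : ℝ) / 2) *
          (⨆ s ∈ Set.Icc ℓ (Real.sqrt 2 * ℓ),
            (∫⁻ w in annulus z ℓ j, F s w ^ 2) ^ ((1 : ℝ) / 2))
        ≤ ENNReal.ofReal ((2 : ℝ) ^ (-(j : ℝ) * N)) *
          (ENNReal.ofReal (B ^ n)) ^ (-(1 : ℝ) / 2) *
          (ENNReal.ofReal (A ^ n) ^ ((1 : ℝ) / 2) * P) :=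
        mul_le_mul_right (hsup.trans hmax) _
    _ = (ENNReal.ofReal ((2 : ℝ) ^ (-(j : ℝ) * N)) *
          (ENNReal.ofReal (B ^ n)) ^ (-(1 : ℝ) / 2) *
          ENNReal.ofReal (A ^ n) ^ ((1 : ℝ) / 2)) * P := by ring
    _ = ENNReal.ofReal ((2 : ℝ) ^ n * r ^ j) * P := by rw [hcoef]
  -- Step B : sum up
  calc (∑' j : ℕ, ENNReal.ofReal ((2 : ℝ) ^ (-(j : ℝ) * N)) *
          (ENNReal.ofReal (((2 : ℝ) ^ j * ℓ) ^ n)) ^ (-(1 : ℝ) / 2) *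
          ⨆ s ∈ Set.Icc ℓ (Real.sqrt 2 * ℓ),
            (∫⁻ w in annulus z ℓ j, F s w ^ 2) ^ ((1 : ℝ) / 2))
      ≤ ∑' j : ℕ, ENNReal.ofReal ((2 : ℝ) ^ n * r ^ j) * P := ENNReal.tsum_le_tsum stepA
  _ = (∑' j : ℕ, ENNReal.ofReal ((2 : ℝ) ^ n * r ^ j)) * P := ENNReal.tsum_mul_right
  _ = ENNReal.ofReal ((2 : ℝ) ^ n * (1 - r)⁻¹) * P := by
      rw [← ENNReal.ofReal_tsum_of_nonneg (fun j => by positivity)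
        ((summable_geometric_of_lt_one hr0 hr1).mul_left _)]
      rw [tsum_mul_left, tsum_geometric_of_lt_one hr0 hr1]
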